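/- arXiv:2003.07164 — 2 statements merged into one kernel-verified Lean document; each statement's English description precedes it below -/
import Mathlib

section
/- Let p be a prime with p > 3, let ω = exp(2πi/p), and let H and V_S be the p×p complex matrices (indexed by ZMod p) defined by H e_k = p^{-1/2} · Σ_{j∈ZMod p} ω^{jk} e_j and V_S e_k = ω^{2^{-1}·k²} e_k, where 2^{-1} denotes the inverse of 2 in ZMod p. Then there is no nonzero vector v ∈ ℂ^p that is simultaneously an eigenvector of H and of V_S; i.e., there do not exist nonzero v and scalars λ, μ ∈ ℂ with H v = λ v and V_S v = μ v. -/
open scoped BigOperators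
open Complex Matrix

noncomputable def omg (p : ℕ) : ℂ := Complex.exp (2 * Real.pi * Complex.I / p)

noncomputable def Hmat (p : ℕ) : Matrix (ZMod p) (ZMod p) ℂ :=
  Matrix.of fun j k => (Real.sqrt p : ℂ)⁻¹ * omg p ^ ((j * k : ZMod p).val)

noncomputable def VS (p : ℕ) : Matrix (ZMod p) (ZMod p) ℂ :=
  Matrix.diagonal fun k => omg p ^ (((2 : ZMod p)⁻¹ * k ^ 2).val)

def Xmat (p : ℕ) : Matrix (ZMod p) (ZMod p) ℂ :=
  Matrix.of fun j k => if j = k + 1 then 1 else 0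

noncomputable def Zmat (p : ℕ) : Matrix (ZMod p) (ZMod p) ℂ :=
  Matrix.diagonal fun k => omg p ^ (k.val)

noncomputable def Dmat (p : ℕ) [NeZero p] (u v : ZMod p) : Matrix (ZMod p) (ZMod p) ℂ :=
  omg p ^ (((2 : ZMod p)⁻¹ * u * v).val) • (Xmat p ^ u.val * Zmat p ^ v.val)

noncomputable def A0 (p : ℕ) [NeZero p] : Matrix (ZMod p) (ZMod p) ℂ :=
  (p : ℂ)⁻¹ • ∑ u : ZMod p, ∑ v : ZMod p, Dmat p u v

noncomputable def Amat (p : ℕ) [NeZero p] (χ : ZMod p × ZMod p) : Matrix (ZMod p) (ZMod p) ℂ :=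
  Dmat p χ.1 χ.2 * A0 p * (Dmat p χ.1 χ.2)ᴴ

noncomputable def W (p : ℕ) [NeZero p] (χ : ZMod p × ZMod p) (v : ZMod p → ℂ) : ℂ :=
  (p : ℂ)⁻¹ * (star v ⬝ᵥ (Amat p χ).mulVec v)

def Pmat (p : ℕ) : Matrix (ZMod p) (ZMod p) ℂ :=
  Matrix.of fun j k => if j = -k then 1 else 0

lemma omg_prim (p : ℕ) [Fact p.Prime] : IsPrimitiveRoot (omg p) p :=
  Complex.isPrimitiveRoot_exp p (Fact.out : p.Prime).ne_zero

lemma omg_pow_mod (p : ℕ) [Fact p.Prime] (n : ℕ) : omg p ^ (n % p) = omg p ^ n := by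
  conv_rhs => rw [← Nat.mod_add_div n p]
  rw [pow_add, pow_mul, (omg_prim p).pow_eq_one, one_pow, mul_one]

lemma omg_pow_add (p : ℕ) [Fact p.Prime] (x y : ZMod p) :
    omg p ^ (x.val) * omg p ^ (y.val) = omg p ^ ((x + y).val) := by
  haveI : NeZero p := ⟨(Fact.out : p.Prime).ne_zero⟩
  rw [← pow_add, ZMod.val_add, omg_pow_mod]

lemma omg_inj (p : ℕ) [Fact p.Prime] {x y : ZMod p}
    (h : omg p ^ x.val = omg p ^ y.val) : x = y := by
  haveI : NeZero p := ⟨(Fact.out : p.Prime).ne_zero⟩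
  exact ZMod.val_injective p ((omg_prim p).pow_inj x.val_lt y.val_lt h)

theorem no_simultaneous_eigenvector_of_H_and_VS (p : ℕ) [Fact p.Prime] (hp : 3 < p) :
    ¬ ∃ (v : ZMod p → ℂ) (lam mu : ℂ), v ≠ 0 ∧
        (Hmat p).mulVec v = lam • v ∧ (VS p).mulVec v = mu • v := by
  haveI : NeZero p := ⟨(Fact.out : p.Prime).ne_zero⟩
  rintro ⟨v, lam, mu, hv, hH, hVS⟩
  -- basic nonzero facts in ZMod p
  have hcast : ∀ n : ℕ, 0 < n → n < p → (n : ZMod p) ≠ 0 := by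
    intro n hn hnp h
    rw [ZMod.natCast_eq_zero_iff] at h
    exact absurd (Nat.le_of_dvd hn h) (not_le.2 hnp)
  have h2 : (2 : ZMod p) ≠ 0 := by
    have := hcast 2 (by norm_num) (by omega); simpa using this
  have h3 : (3 : ZMod p) ≠ 0 := by
    have := hcast 3 (by norm_num) (by omega); simpa using this
  -- diagonal eigenvector equation
  have hdiag : ∀ j : ZMod p, omg p ^ (((2 : ZMod p)⁻¹ * j ^ 2).val) * v j = mu * v j := by
    intro j
    have := congrFun hVS j
    simpa [VS, Matrix.mulVec_diagonal] using this
  obtain ⟨k, hk⟩ : ∃ k, v k ≠ 0 := by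
    by_contra h; push_neg at h; exact hv (funext h)
  have hmu : omg p ^ (((2 : ZMod p)⁻¹ * k ^ 2).val) = mu := mul_right_cancel₀ hk (hdiag k)
  have hsupp : ∀ j : ZMod p, v j ≠ 0 → j = k ∨ j = -k := by
    intro j hj
    have h1 : omg p ^ (((2 : ZMod p)⁻¹ * j ^ 2).val) = omg p ^ (((2 : ZMod p)⁻¹ * k ^ 2).val) := by
      rw [hmu]; exact mul_right_cancel₀ hj (hdiag j)
    have h2' : (2 : ZMod p)⁻¹ * j ^ 2 = (2 : ZMod p)⁻¹ * k ^ 2 := omg_inj p h1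
    have hsq : j ^ 2 = k ^ 2 := mul_left_cancel₀ (inv_ne_zero h2) h2'
    have : (j - k) * (j + k) = 0 := by ring_nf; linear_combination hsq
    rcases mul_eq_zero.1 this with h | h
    · left; exact sub_eq_zero.1 h
    · right; exact eq_neg_of_add_eq_zero_left h
  -- H eigenvector equation
  have hHj : ∀ j : ZMod p,
      ∑ m : ZMod p, (Real.sqrt p : ℂ)⁻¹ * omg p ^ ((j * m : ZMod p).val) * v m = lam * v j := by
    intro j
    have := congrFun hH j
    simpa [Hmat, Matrix.mulVec, dotProduct, mul_assoc] using this
  have hc : ((Real.sqrt p : ℝ) : ℂ)⁻¹ ≠ 0 := by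
    have hpos : (0:ℝ) < Real.sqrt p := Real.sqrt_pos.2 (by positivity)
    exact inv_ne_zero (by exact_mod_cast hpos.ne')
  by_cases hk0 : k = 0
  · subst hk0
    have hz : ∀ j : ZMod p, j ≠ 0 → v j = 0 := by
      intro j hj
      by_contra h
      rcases hsupp j h with h' | h' <;> simp_all
    have h1 := hHj 1
    rw [Finset.sum_eq_single 0 (fun b _ hb => by rw [hz b hb, mul_zero]) (by simp)] at h1
    rw [hz 1 one_ne_zero, mul_zero] at h1
    simp only [mul_zero, ZMod.val_zero, pow_zero, mul_one] at h1
    exact hk (by simpa [hc] using h1)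
  · have hkk : k ≠ -k := by
      intro h
      have h4 : (2:ZMod p) * k = 0 := by linear_combination h
      rcases mul_eq_zero.1 h4 with h' | h'
      · exact h2 h'
      · exact hk0 h'
    have hzero : (0:ZMod p) ≠ k := fun h => hk0 h.symm
    have hzero' : (0:ZMod p) ≠ -k := fun h => hk0 (neg_eq_zero.1 h.symm)
    have h2k : (2:ZMod p)*k ≠ k := by
      intro h
      exact hk0 (by linear_combination h)
    have h2k' : (2:ZMod p)*k ≠ -k := by
      intro h
      have h4 : (3:ZMod p) * k = 0 := by linear_combination h
      rcases mul_eq_zero.1 h4 with h' | h'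
      · exact h3 h'
      · exact hk0 h'
    have hsum : ∀ j : ZMod p, j ≠ k → j ≠ -k →
        (Real.sqrt p : ℂ)⁻¹ * omg p ^ ((j * k : ZMod p).val) * v k
        + (Real.sqrt p : ℂ)⁻¹ * omg p ^ ((j * (-k) : ZMod p).val) * v (-k) = 0 := by
      intro j hjk hjk'
      have hvj : v j = 0 := by
        by_contra h
        rcases hsupp j h with h' | h'
        · exact hjk h'
        · exact hjk' h'
      have h1 := hHj j
      rw [hvj, mul_zero] at h1
      calc (Real.sqrt p : ℂ)⁻¹ * omg p ^ ((j * k : ZMod p).val) * v k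
            + (Real.sqrt p : ℂ)⁻¹ * omg p ^ ((j * (-k) : ZMod p).val) * v (-k)
          = ∑ m ∈ ({k, -k} : Finset (ZMod p)),
              (Real.sqrt p : ℂ)⁻¹ * omg p ^ ((j * m : ZMod p).val) * v m :=
            by rw [Finset.sum_pair hkk]
        _ = ∑ m : ZMod p, (Real.sqrt p : ℂ)⁻¹ * omg p ^ ((j * m : ZMod p).val) * v m := by
            refine Finset.sum_subset (Finset.subset_univ _) (fun x _ hx => ?_)
            simp only [Finset.mem_insert, Finset.mem_singleton, not_or] at hx
            have : v x = 0 := by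
              by_contra h
              rcases hsupp x h with h' | h'
              · exact hx.1 h'
              · exact hx.2 h'
            rw [this, mul_zero]
        _ = 0 := h1
    have e0 := hsum 0 hzero hzero'
    simp only [zero_mul, ZMod.val_zero, pow_zero, mul_one] at e0
    have hvk : v (-k) = - v k := by
      have h4 : ((Real.sqrt p : ℝ) : ℂ)⁻¹ * (v k + v (-k)) = 0 := by linear_combination e0
      rcases mul_eq_zero.1 h4 with h' | h'
      · exact absurd h' hc
      · linear_combination h'
    have e2 := hsum ((2:ZMod p)*k) h2k h2k'
    rw [hvk] at e2
    have h5 : ((Real.sqrt p : ℝ) : ℂ)⁻¹ * v k *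
        (omg p ^ (((2:ZMod p)*k * k).val) - omg p ^ (((2:ZMod p)*k * (-k)).val)) = 0 := by
      linear_combination e2
    have h6 : omg p ^ (((2:ZMod p)*k * k).val) = omg p ^ (((2:ZMod p)*k * (-k)).val) := by
      rcases mul_eq_zero.1 h5 with h' | h'
      · rcases mul_eq_zero.1 h' with h'' | h''
        · exact absurd h'' hc
        · exact absurd h'' hk
      · linear_combination h'
    have h7 : (2:ZMod p)*k*k = (2:ZMod p)*k*(-k) := omg_inj p h6
    have h8 : ((2:ZMod p)*(2:ZMod p)) * (k*k) = 0 := by linear_combination h7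
    rcases mul_eq_zero.1 h8 with h' | h'
    · rcases mul_eq_zero.1 h' with h'' | h'' <;> exact h2 h''
    · rcases mul_eq_zero.1 h' with h'' | h'' <;> exact hk0 h''
end

section
/- Let ω = exp(2πi/3) and define on ℂ³ (indexed by ZMod 3) the operators X e_n = e_{n+1}, Z e_n = ω^n e_n, D_{(u,v)} = ω^{2uv} X^u Z^v, A_{(0,0)} = (1/3) Σ_{u,v} D_{(u,v)}, A_χ = D_χ A_{(0,0)} D_χ†, and for a unit vector v ∈ ℂ³ the discrete Wigner function W_χ(v) = (1/3)·Re⟨v, A_χ v⟩. Then for every unit vector v ∈ ℂ³, the number of points χ ∈ (ZMod 3)² with W_χ(v) < 0 is at most 4. -/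
open scoped BigOperators
open Complex Matrix

/-- The real-valued discrete Wigner function `W_χ(v) = (1/3)·Re⟨v, A_χ v⟩`. -/
noncomputable def Wre (χ : ZMod 3 × ZMod 3) (v : ZMod 3 → ℂ) : ℝ :=
  (1 / 3) * (star v ⬝ᵥ (Amat 3 χ).mulVec v).re


lemma sum3 (f : ZMod 3 → ℂ) : ∑ x : ZMod 3, f x = f 0 + f 1 + f 2 :=
  Fin.sum_univ_three f
lemma homg3 : omg 3 ^ 3 = 1 := by
  unfold omg
  rw [← Complex.exp_nat_mul,
    show (3:ℕ) * (2 * (Real.pi:ℂ) * Complex.I / (3:ℕ)) = 2 * ↑Real.pi * Complex.I by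
      push_cast; ring]
  exact Complex.exp_two_pi_mul_I
lemma homg_ne : omg 3 ≠ 1 := by
  unfold omg
  rw [Ne, Complex.exp_eq_one_iff]
  push_neg
  intro n h
  have h2 : (2 * (Real.pi:ℂ) * Complex.I) * 1 = (2 * (Real.pi:ℂ) * Complex.I) * (3 * n) := by
    field_simp at h
    linear_combination (2 * (Real.pi:ℂ) * Complex.I) * h
  have hne : (2 * (Real.pi:ℂ) * Complex.I) ≠ 0 := by
    simp [Real.pi_ne_zero, Complex.I_ne_zero]
  have h3 : (1:ℂ) = 3 * n := mul_left_cancel₀ hne h2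
  have : (1:ℤ) = 3 * n := by exact_mod_cast h3
  omega
lemma homg_sum : 1 + omg 3 + omg 3 ^ 2 = 0 := by
  have h : (omg 3 - 1) * (1 + omg 3 + omg 3 ^ 2) = 0 := by linear_combination homg3
  rcases mul_eq_zero.mp h with h1 | h2
  · exact absurd (by linear_combination h1) homg_ne
  · exact h2
lemma homg_abs : omg 3 * (starRingEnd ℂ) (omg 3) = 1 := by
  rw [Complex.mul_conj]
  unfold omg
  rw [Complex.normSq_eq_norm_sq, Complex.norm_exp]
  norm_num [Complex.div_re]
lemma homg_conj : (starRingEnd ℂ) (omg 3) = omg 3 ^ 2 := by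
  have hne : omg 3 ≠ 0 := Complex.exp_ne_zero _
  have : omg 3 * (starRingEnd ℂ) (omg 3) = omg 3 * omg 3 ^ 2 := by
    rw [homg_abs, ← homg3]; ring
  exact mul_left_cancel₀ hne this
lemma Xpow (n : ℕ) : (Xmat 3) ^ n = Matrix.of fun j k => if j = k + (n : ZMod 3) then 1 else 0 := by
  induction n with
  | zero => ext j k; simp [Matrix.one_apply, eq_comm]
  | succ m ih =>
    rw [pow_succ, ih]
    ext j k
    rw [Matrix.mul_apply]
    rw [Finset.sum_eq_single (k+1)]
    · push_cast
      simp [Xmat, add_comm, add_assoc, add_left_comm]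
    · intro b _ hb
      simp [Xmat, hb]
    · simp
lemma Zpow (n : ℕ) : (Zmat 3) ^ n = Matrix.diagonal fun k => omg 3 ^ (k.val * n) := by
  induction n with
  | zero => simp [Matrix.diagonal_one]
  | succ m ih =>
    rw [pow_succ, ih, Zmat, Matrix.diagonal_mul_diagonal]
    refine congrArg Matrix.diagonal (funext fun i => ?_)
    rw [← pow_add]; ring_nf
lemma hinv : (2 : ZMod 3)⁻¹ = 2 := inv_eq_of_mul_eq_one_right (by decide)
lemma Dmat_apply (u v j k : ZMod 3) :
    Dmat 3 u v j k = if j = k + u then omg 3 ^ (((2:ZMod 3) * u * v).val + k.val * v.val) else 0 := by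
  rw [Dmat, hinv, Xpow, Zpow, Matrix.smul_apply, Matrix.mul_apply]
  rw [Finset.sum_eq_single k]
  · rw [ZMod.natCast_val, ZMod.cast_id]
    simp [Matrix.diagonal, pow_add]
  · intro b _ hb; simp [Matrix.diagonal_apply_ne _ hb]
  · simp
lemma zadd00 : ((0:ZMod 3) + 0) = 0 := by decide
lemma zmul00 : ((0:ZMod 3) * 0) = 0 := by decide
lemma zadd01 : ((0:ZMod 3) + 1) = 1 := by decide
lemma zmul01 : ((0:ZMod 3) * 1) = 0 := by decide
lemma zne01 : ¬((0:ZMod 3) = 1) := by decide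
lemma zadd02 : ((0:ZMod 3) + 2) = 2 := by decide
lemma zmul02 : ((0:ZMod 3) * 2) = 0 := by decide
lemma zne02 : ¬((0:ZMod 3) = 2) := by decide
lemma zadd10 : ((1:ZMod 3) + 0) = 1 := by decide
lemma zmul10 : ((1:ZMod 3) * 0) = 0 := by decide
lemma zne10 : ¬((1:ZMod 3) = 0) := by decide
lemma zadd11 : ((1:ZMod 3) + 1) = 2 := by decide
lemma zmul11 : ((1:ZMod 3) * 1) = 1 := by decide
lemma zadd12 : ((1:ZMod 3) + 2) = 0 := by decide
lemma zmul12 : ((1:ZMod 3) * 2) = 2 := by decide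
lemma zne12 : ¬((1:ZMod 3) = 2) := by decide
lemma zadd20 : ((2:ZMod 3) + 0) = 2 := by decide
lemma zmul20 : ((2:ZMod 3) * 0) = 0 := by decide
lemma zne20 : ¬((2:ZMod 3) = 0) := by decide
lemma zadd21 : ((2:ZMod 3) + 1) = 0 := by decide
lemma zmul21 : ((2:ZMod 3) * 1) = 2 := by decide
lemma zne21 : ¬((2:ZMod 3) = 1) := by decide
lemma zadd22 : ((2:ZMod 3) + 2) = 1 := by decide
lemma zmul22 : ((2:ZMod 3) * 2) = 1 := by decide
lemma zneg0 : -(0 : ZMod 3) = 0 := by decide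
lemma zneg1 : -(1 : ZMod 3) = 2 := by decide
lemma zneg2 : -(2 : ZMod 3) = 1 := by decide
lemma zval0 : ((0 : ZMod 3)).val = 0 := by decide
lemma zval1 : ((1 : ZMod 3)).val = 1 := by decide
lemma zval2 : ((2 : ZMod 3)).val = 2 := by decide
lemma pwr2 : omg 3 ^ 2 = -1 - omg 3 := by linear_combination homg_sum
lemma pwr3 : omg 3 ^ 3 = 1 := homg3
lemma pwr4 : omg 3 ^ 4 = omg 3 := by
  rw [show 4 = 3 + 1 by norm_num, pow_add, homg3, one_mul] <;> exact pow_one _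
lemma pwr5 : omg 3 ^ 5 = -1 - omg 3 := by
  rw [show 5 = 3 + 2 by norm_num, pow_add, homg3, one_mul] <;> first | exact pwr2 | rfl
lemma pwr6 : omg 3 ^ 6 = 1 := by
  rw [show 6 = 3 + 3 by norm_num, pow_add, homg3, one_mul] <;> first | exact pwr3 | rfl
lemma pwr7 : omg 3 ^ 7 = omg 3 := by
  rw [show 7 = 3 + 4 by norm_num, pow_add, homg3, one_mul] <;> first | exact pwr4 | rfl
lemma pwr8 : omg 3 ^ 8 = -1 - omg 3 := by
  rw [show 8 = 3 + 5 by norm_num, pow_add, homg3, one_mul] <;> first | exact pwr5 | rfl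
lemma pwr9 : omg 3 ^ 9 = 1 := by
  rw [show 9 = 3 + 6 by norm_num, pow_add, homg3, one_mul] <;> first | exact pwr6 | rfl
lemma pwr10 : omg 3 ^ 10 = omg 3 := by
  rw [show 10 = 3 + 7 by norm_num, pow_add, homg3, one_mul] <;> first | exact pwr7 | rfl
lemma pwr11 : omg 3 ^ 11 = -1 - omg 3 := by
  rw [show 11 = 3 + 8 by norm_num, pow_add, homg3, one_mul] <;> first | exact pwr8 | rfl
lemma pwr12 : omg 3 ^ 12 = 1 := by
  rw [show 12 = 3 + 9 by norm_num, pow_add, homg3, one_mul] <;> first | exact pwr9 | rfl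
lemma pwr13 : omg 3 ^ 13 = omg 3 := by
  rw [show 13 = 3 + 10 by norm_num, pow_add, homg3, one_mul] <;> first | exact pwr10 | rfl
lemma pwr14 : omg 3 ^ 14 = -1 - omg 3 := by
  rw [show 14 = 3 + 11 by norm_num, pow_add, homg3, one_mul] <;> first | exact pwr11 | rfl
lemma pwr15 : omg 3 ^ 15 = 1 := by
  rw [show 15 = 3 + 12 by norm_num, pow_add, homg3, one_mul] <;> first | exact pwr12 | rfl
lemma pwr16 : omg 3 ^ 16 = omg 3 := by
  rw [show 16 = 3 + 13 by norm_num, pow_add, homg3, one_mul] <;> first | exact pwr13 | rfl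
lemma pwr17 : omg 3 ^ 17 = -1 - omg 3 := by
  rw [show 17 = 3 + 14 by norm_num, pow_add, homg3, one_mul] <;> first | exact pwr14 | rfl
lemma pwr18 : omg 3 ^ 18 = 1 := by
  rw [show 18 = 3 + 15 by norm_num, pow_add, homg3, one_mul] <;> first | exact pwr15 | rfl
lemma pwr19 : omg 3 ^ 19 = omg 3 := by
  rw [show 19 = 3 + 16 by norm_num, pow_add, homg3, one_mul] <;> first | exact pwr16 | rfl
lemma pwr20 : omg 3 ^ 20 = -1 - omg 3 := by
  rw [show 20 = 3 + 17 by norm_num, pow_add, homg3, one_mul] <;> first | exact pwr17 | rfl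
lemma pwr21 : omg 3 ^ 21 = 1 := by
  rw [show 21 = 3 + 18 by norm_num, pow_add, homg3, one_mul] <;> first | exact pwr18 | rfl
lemma pwr22 : omg 3 ^ 22 = omg 3 := by
  rw [show 22 = 3 + 19 by norm_num, pow_add, homg3, one_mul] <;> first | exact pwr19 | rfl
lemma pwr23 : omg 3 ^ 23 = -1 - omg 3 := by
  rw [show 23 = 3 + 20 by norm_num, pow_add, homg3, one_mul] <;> first | exact pwr20 | rfl
lemma pwr24 : omg 3 ^ 24 = 1 := by
  rw [show 24 = 3 + 21 by norm_num, pow_add, homg3, one_mul] <;> first | exact pwr21 | rfl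


lemma A0_eq : A0 3 = Pmat 3 := by
  ext j k
  rcases (by decide : ∀ x : ZMod 3, x = 0 ∨ x = 1 ∨ x = 2) j with rfl | rfl | rfl <;>
    rcases (by decide : ∀ x : ZMod 3, x = 0 ∨ x = 1 ∨ x = 2) k with rfl | rfl | rfl <;>
    simp [A0, Matrix.sum_apply, sum3, Dmat_apply, Pmat, zadd00, zmul00, zadd01, zmul01, zne01, zadd02, zmul02, zne02, zadd10, zmul10, zne10, zadd11, zmul11, zadd12, zmul12, zne12, zadd20, zmul20, zne20, zadd21, zmul21, zne21, zadd22, zmul22, zneg0, zneg1, zneg2, zval0, zval1, zval2, pwr2, pwr3, pwr4, pwr5, pwr6, pwr7, pwr8, pwr9, pwr10, pwr11, pwr12, pwr13, pwr14, pwr15, pwr16, pwr17, pwr18, pwr19, pwr20, pwr21, pwr22, pwr23, pwr24] <;>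
    ring_nf <;> norm_num [pwr3]

lemma key (c : ℝ) (hc : 0 ≤ c) (w v : ZMod 3 → ℂ) (S : Matrix (ZMod 3) (ZMod 3) ℂ)
    (hS : S = (c:ℂ) • vecMulVec w (star w)) :
    0 ≤ (star v ⬝ᵥ S.mulVec v).re := by
  have hd : star v ⬝ᵥ S.mulVec v
      = (c:ℂ) * ((star w ⬝ᵥ v) * (starRingEnd ℂ) (star w ⬝ᵥ v)) := by
    subst hS
    simp only [dotProduct, Matrix.mulVec, Matrix.smul_apply, Matrix.vecMulVec_apply,
      Pi.star_apply, sum3, map_add, _root_.map_mul, smul_eq_mul, Complex.star_def,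
      Complex.conj_conj]
    ring
  rw [hd, Complex.mul_conj, ← Complex.ofReal_mul, Complex.ofReal_re]
  exact mul_nonneg hc (Complex.normSq_nonneg _)
noncomputable def wvec0 : ZMod 3 → ℂ := fun j => if j = 0 then (1:ℂ) else if j = 1 then (0:ℂ) else (0:ℂ)
lemma lineEq0 : Amat 3 (0,0) + Amat 3 (0,1) + Amat 3 (0,2)
    = ((3:ℝ):ℂ) • vecMulVec wvec0 (star wvec0) := by
  ext j k
  rcases (by decide : ∀ x : ZMod 3, x = 0 ∨ x = 1 ∨ x = 2) j with rfl | rfl | rfl <;>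
    rcases (by decide : ∀ x : ZMod 3, x = 0 ∨ x = 1 ∨ x = 2) k with rfl | rfl | rfl <;>
    simp [Amat, A0_eq, Pmat, Matrix.mul_apply, Matrix.conjTranspose_apply, Matrix.add_apply,
      Matrix.smul_apply, Matrix.vecMulVec_apply, Pi.star_apply, Complex.star_def, sum3,
      Dmat_apply, map_pow, homg_conj, wvec0, zadd00, zmul00, zadd01, zmul01, zne01, zadd02, zmul02, zne02, zadd10, zmul10, zne10, zadd11, zmul11, zadd12, zmul12, zne12, zadd20, zmul20, zne20, zadd21, zmul21, zne21, zadd22, zmul22, zneg0, zneg1, zneg2, zval0, zval1, zval2, pwr2, pwr3, pwr4, pwr5, pwr6, pwr7, pwr8, pwr9, pwr10, pwr11, pwr12, pwr13, pwr14, pwr15, pwr16, pwr17, pwr18, pwr19, pwr20, pwr21, pwr22, pwr23, pwr24] <;>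
    (try ring_nf) <;> (try norm_num [pwr2, pwr3, pwr4, pwr5, pwr6, pwr7, pwr8, pwr9, pwr10, pwr11, pwr12, pwr13, pwr14, pwr15, pwr16, pwr17, pwr18, pwr19, pwr20, pwr21, pwr22, pwr23, pwr24]) <;> (try ring)
lemma lineW0 (v : ZMod 3 → ℂ) :
    0 ≤ Wre (0,0) v + Wre (0,1) v + Wre (0,2) v := by
  have h := key 3 (by norm_num) wvec0 v _ lineEq0
  rw [Matrix.add_mulVec, Matrix.add_mulVec, dotProduct_add, dotProduct_add,
    Complex.add_re, Complex.add_re] at h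
  unfold Wre
  nlinarith [h]
noncomputable def wvec1 : ZMod 3 → ℂ := fun j => if j = 0 then (0:ℂ) else if j = 1 then (1:ℂ) else (0:ℂ)
lemma lineEq1 : Amat 3 (1,0) + Amat 3 (1,1) + Amat 3 (1,2)
    = ((3:ℝ):ℂ) • vecMulVec wvec1 (star wvec1) := by
  ext j k
  rcases (by decide : ∀ x : ZMod 3, x = 0 ∨ x = 1 ∨ x = 2) j with rfl | rfl | rfl <;>
    rcases (by decide : ∀ x : ZMod 3, x = 0 ∨ x = 1 ∨ x = 2) k with rfl | rfl | rfl <;>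
    simp [Amat, A0_eq, Pmat, Matrix.mul_apply, Matrix.conjTranspose_apply, Matrix.add_apply,
      Matrix.smul_apply, Matrix.vecMulVec_apply, Pi.star_apply, Complex.star_def, sum3,
      Dmat_apply, map_pow, homg_conj, wvec1, zadd00, zmul00, zadd01, zmul01, zne01, zadd02, zmul02, zne02, zadd10, zmul10, zne10, zadd11, zmul11, zadd12, zmul12, zne12, zadd20, zmul20, zne20, zadd21, zmul21, zne21, zadd22, zmul22, zneg0, zneg1, zneg2, zval0, zval1, zval2, pwr2, pwr3, pwr4, pwr5, pwr6, pwr7, pwr8, pwr9, pwr10, pwr11, pwr12, pwr13, pwr14, pwr15, pwr16, pwr17, pwr18, pwr19, pwr20, pwr21, pwr22, pwr23, pwr24] <;>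
    (try ring_nf) <;> (try norm_num [pwr2, pwr3, pwr4, pwr5, pwr6, pwr7, pwr8, pwr9, pwr10, pwr11, pwr12, pwr13, pwr14, pwr15, pwr16, pwr17, pwr18, pwr19, pwr20, pwr21, pwr22, pwr23, pwr24]) <;> (try ring)
lemma lineW1 (v : ZMod 3 → ℂ) :
    0 ≤ Wre (1,0) v + Wre (1,1) v + Wre (1,2) v := by
  have h := key 3 (by norm_num) wvec1 v _ lineEq1
  rw [Matrix.add_mulVec, Matrix.add_mulVec, dotProduct_add, dotProduct_add,
    Complex.add_re, Complex.add_re] at h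
  unfold Wre
  nlinarith [h]
noncomputable def wvec2 : ZMod 3 → ℂ := fun j => if j = 0 then (0:ℂ) else if j = 1 then (0:ℂ) else (1:ℂ)
lemma lineEq2 : Amat 3 (2,0) + Amat 3 (2,1) + Amat 3 (2,2)
    = ((3:ℝ):ℂ) • vecMulVec wvec2 (star wvec2) := by
  ext j k
  rcases (by decide : ∀ x : ZMod 3, x = 0 ∨ x = 1 ∨ x = 2) j with rfl | rfl | rfl <;>
    rcases (by decide : ∀ x : ZMod 3, x = 0 ∨ x = 1 ∨ x = 2) k with rfl | rfl | rfl <;>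
    simp [Amat, A0_eq, Pmat, Matrix.mul_apply, Matrix.conjTranspose_apply, Matrix.add_apply,
      Matrix.smul_apply, Matrix.vecMulVec_apply, Pi.star_apply, Complex.star_def, sum3,
      Dmat_apply, map_pow, homg_conj, wvec2, zadd00, zmul00, zadd01, zmul01, zne01, zadd02, zmul02, zne02, zadd10, zmul10, zne10, zadd11, zmul11, zadd12, zmul12, zne12, zadd20, zmul20, zne20, zadd21, zmul21, zne21, zadd22, zmul22, zneg0, zneg1, zneg2, zval0, zval1, zval2, pwr2, pwr3, pwr4, pwr5, pwr6, pwr7, pwr8, pwr9, pwr10, pwr11, pwr12, pwr13, pwr14, pwr15, pwr16, pwr17, pwr18, pwr19, pwr20, pwr21, pwr22, pwr23, pwr24] <;>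
    (try ring_nf) <;> (try norm_num [pwr2, pwr3, pwr4, pwr5, pwr6, pwr7, pwr8, pwr9, pwr10, pwr11, pwr12, pwr13, pwr14, pwr15, pwr16, pwr17, pwr18, pwr19, pwr20, pwr21, pwr22, pwr23, pwr24]) <;> (try ring)
lemma lineW2 (v : ZMod 3 → ℂ) :
    0 ≤ Wre (2,0) v + Wre (2,1) v + Wre (2,2) v := by
  have h := key 3 (by norm_num) wvec2 v _ lineEq2
  rw [Matrix.add_mulVec, Matrix.add_mulVec, dotProduct_add, dotProduct_add,
    Complex.add_re, Complex.add_re] at h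
  unfold Wre
  nlinarith [h]
noncomputable def wvec3 : ZMod 3 → ℂ := fun j => if j = 0 then (1:ℂ) else if j = 1 then (1:ℂ) else (1:ℂ)
lemma lineEq3 : Amat 3 (0,0) + Amat 3 (1,0) + Amat 3 (2,0)
    = ((1:ℝ):ℂ) • vecMulVec wvec3 (star wvec3) := by
  ext j k
  rcases (by decide : ∀ x : ZMod 3, x = 0 ∨ x = 1 ∨ x = 2) j with rfl | rfl | rfl <;>
    rcases (by decide : ∀ x : ZMod 3, x = 0 ∨ x = 1 ∨ x = 2) k with rfl | rfl | rfl <;>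
    simp [Amat, A0_eq, Pmat, Matrix.mul_apply, Matrix.conjTranspose_apply, Matrix.add_apply,
      Matrix.smul_apply, Matrix.vecMulVec_apply, Pi.star_apply, Complex.star_def, sum3,
      Dmat_apply, map_pow, homg_conj, wvec3, zadd00, zmul00, zadd01, zmul01, zne01, zadd02, zmul02, zne02, zadd10, zmul10, zne10, zadd11, zmul11, zadd12, zmul12, zne12, zadd20, zmul20, zne20, zadd21, zmul21, zne21, zadd22, zmul22, zneg0, zneg1, zneg2, zval0, zval1, zval2, pwr2, pwr3, pwr4, pwr5, pwr6, pwr7, pwr8, pwr9, pwr10, pwr11, pwr12, pwr13, pwr14, pwr15, pwr16, pwr17, pwr18, pwr19, pwr20, pwr21, pwr22, pwr23, pwr24] <;>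
    (try ring_nf) <;> (try norm_num [pwr2, pwr3, pwr4, pwr5, pwr6, pwr7, pwr8, pwr9, pwr10, pwr11, pwr12, pwr13, pwr14, pwr15, pwr16, pwr17, pwr18, pwr19, pwr20, pwr21, pwr22, pwr23, pwr24]) <;> (try ring)
lemma lineW3 (v : ZMod 3 → ℂ) :
    0 ≤ Wre (0,0) v + Wre (1,0) v + Wre (2,0) v := by
  have h := key 1 (by norm_num) wvec3 v _ lineEq3
  rw [Matrix.add_mulVec, Matrix.add_mulVec, dotProduct_add, dotProduct_add,
    Complex.add_re, Complex.add_re] at h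
  unfold Wre
  nlinarith [h]
noncomputable def wvec4 : ZMod 3 → ℂ := fun j => if j = 0 then (1:ℂ) else if j = 1 then omg 3 ^ 2 else omg 3 ^ 2
lemma lineEq4 : Amat 3 (0,0) + Amat 3 (1,1) + Amat 3 (2,2)
    = ((1:ℝ):ℂ) • vecMulVec wvec4 (star wvec4) := by
  ext j k
  rcases (by decide : ∀ x : ZMod 3, x = 0 ∨ x = 1 ∨ x = 2) j with rfl | rfl | rfl <;>
    rcases (by decide : ∀ x : ZMod 3, x = 0 ∨ x = 1 ∨ x = 2) k with rfl | rfl | rfl <;>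
    simp [Amat, A0_eq, Pmat, Matrix.mul_apply, Matrix.conjTranspose_apply, Matrix.add_apply,
      Matrix.smul_apply, Matrix.vecMulVec_apply, Pi.star_apply, Complex.star_def, sum3,
      Dmat_apply, map_pow, homg_conj, wvec4, zadd00, zmul00, zadd01, zmul01, zne01, zadd02, zmul02, zne02, zadd10, zmul10, zne10, zadd11, zmul11, zadd12, zmul12, zne12, zadd20, zmul20, zne20, zadd21, zmul21, zne21, zadd22, zmul22, zneg0, zneg1, zneg2, zval0, zval1, zval2, pwr2, pwr3, pwr4, pwr5, pwr6, pwr7, pwr8, pwr9, pwr10, pwr11, pwr12, pwr13, pwr14, pwr15, pwr16, pwr17, pwr18, pwr19, pwr20, pwr21, pwr22, pwr23, pwr24] <;>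
    (try ring_nf) <;> (try norm_num [pwr2, pwr3, pwr4, pwr5, pwr6, pwr7, pwr8, pwr9, pwr10, pwr11, pwr12, pwr13, pwr14, pwr15, pwr16, pwr17, pwr18, pwr19, pwr20, pwr21, pwr22, pwr23, pwr24]) <;> (try ring)
lemma lineW4 (v : ZMod 3 → ℂ) :
    0 ≤ Wre (0,0) v + Wre (1,1) v + Wre (2,2) v := by
  have h := key 1 (by norm_num) wvec4 v _ lineEq4
  rw [Matrix.add_mulVec, Matrix.add_mulVec, dotProduct_add, dotProduct_add,
    Complex.add_re, Complex.add_re] at h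
  unfold Wre
  nlinarith [h]
noncomputable def wvec5 : ZMod 3 → ℂ := fun j => if j = 0 then (1:ℂ) else if j = 1 then omg 3 else omg 3
lemma lineEq5 : Amat 3 (0,0) + Amat 3 (1,2) + Amat 3 (2,1)
    = ((1:ℝ):ℂ) • vecMulVec wvec5 (star wvec5) := by
  ext j k
  rcases (by decide : ∀ x : ZMod 3, x = 0 ∨ x = 1 ∨ x = 2) j with rfl | rfl | rfl <;>
    rcases (by decide : ∀ x : ZMod 3, x = 0 ∨ x = 1 ∨ x = 2) k with rfl | rfl | rfl <;>
    simp [Amat, A0_eq, Pmat, Matrix.mul_apply, Matrix.conjTranspose_apply, Matrix.add_apply,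
      Matrix.smul_apply, Matrix.vecMulVec_apply, Pi.star_apply, Complex.star_def, sum3,
      Dmat_apply, map_pow, homg_conj, wvec5, zadd00, zmul00, zadd01, zmul01, zne01, zadd02, zmul02, zne02, zadd10, zmul10, zne10, zadd11, zmul11, zadd12, zmul12, zne12, zadd20, zmul20, zne20, zadd21, zmul21, zne21, zadd22, zmul22, zneg0, zneg1, zneg2, zval0, zval1, zval2, pwr2, pwr3, pwr4, pwr5, pwr6, pwr7, pwr8, pwr9, pwr10, pwr11, pwr12, pwr13, pwr14, pwr15, pwr16, pwr17, pwr18, pwr19, pwr20, pwr21, pwr22, pwr23, pwr24] <;>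
    (try ring_nf) <;> (try norm_num [pwr2, pwr3, pwr4, pwr5, pwr6, pwr7, pwr8, pwr9, pwr10, pwr11, pwr12, pwr13, pwr14, pwr15, pwr16, pwr17, pwr18, pwr19, pwr20, pwr21, pwr22, pwr23, pwr24]) <;> (try ring)
lemma lineW5 (v : ZMod 3 → ℂ) :
    0 ≤ Wre (0,0) v + Wre (1,2) v + Wre (2,1) v := by
  have h := key 1 (by norm_num) wvec5 v _ lineEq5
  rw [Matrix.add_mulVec, Matrix.add_mulVec, dotProduct_add, dotProduct_add,
    Complex.add_re, Complex.add_re] at h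
  unfold Wre
  nlinarith [h]
noncomputable def wvec6 : ZMod 3 → ℂ := fun j => if j = 0 then (1:ℂ) else if j = 1 then omg 3 ^ 2 else (1:ℂ)
lemma lineEq6 : Amat 3 (0,1) + Amat 3 (1,0) + Amat 3 (2,2)
    = ((1:ℝ):ℂ) • vecMulVec wvec6 (star wvec6) := by
  ext j k
  rcases (by decide : ∀ x : ZMod 3, x = 0 ∨ x = 1 ∨ x = 2) j with rfl | rfl | rfl <;>
    rcases (by decide : ∀ x : ZMod 3, x = 0 ∨ x = 1 ∨ x = 2) k with rfl | rfl | rfl <;>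
    simp [Amat, A0_eq, Pmat, Matrix.mul_apply, Matrix.conjTranspose_apply, Matrix.add_apply,
      Matrix.smul_apply, Matrix.vecMulVec_apply, Pi.star_apply, Complex.star_def, sum3,
      Dmat_apply, map_pow, homg_conj, wvec6, zadd00, zmul00, zadd01, zmul01, zne01, zadd02, zmul02, zne02, zadd10, zmul10, zne10, zadd11, zmul11, zadd12, zmul12, zne12, zadd20, zmul20, zne20, zadd21, zmul21, zne21, zadd22, zmul22, zneg0, zneg1, zneg2, zval0, zval1, zval2, pwr2, pwr3, pwr4, pwr5, pwr6, pwr7, pwr8, pwr9, pwr10, pwr11, pwr12, pwr13, pwr14, pwr15, pwr16, pwr17, pwr18, pwr19, pwr20, pwr21, pwr22, pwr23, pwr24] <;>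
    (try ring_nf) <;> (try norm_num [pwr2, pwr3, pwr4, pwr5, pwr6, pwr7, pwr8, pwr9, pwr10, pwr11, pwr12, pwr13, pwr14, pwr15, pwr16, pwr17, pwr18, pwr19, pwr20, pwr21, pwr22, pwr23, pwr24]) <;> (try ring)
lemma lineW6 (v : ZMod 3 → ℂ) :
    0 ≤ Wre (0,1) v + Wre (1,0) v + Wre (2,2) v := by
  have h := key 1 (by norm_num) wvec6 v _ lineEq6
  rw [Matrix.add_mulVec, Matrix.add_mulVec, dotProduct_add, dotProduct_add,
    Complex.add_re, Complex.add_re] at h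
  unfold Wre
  nlinarith [h]
noncomputable def wvec7 : ZMod 3 → ℂ := fun j => if j = 0 then (1:ℂ) else if j = 1 then omg 3 else omg 3 ^ 2
lemma lineEq7 : Amat 3 (0,1) + Amat 3 (1,1) + Amat 3 (2,1)
    = ((1:ℝ):ℂ) • vecMulVec wvec7 (star wvec7) := by
  ext j k
  rcases (by decide : ∀ x : ZMod 3, x = 0 ∨ x = 1 ∨ x = 2) j with rfl | rfl | rfl <;>
    rcases (by decide : ∀ x : ZMod 3, x = 0 ∨ x = 1 ∨ x = 2) k with rfl | rfl | rfl <;>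
    simp [Amat, A0_eq, Pmat, Matrix.mul_apply, Matrix.conjTranspose_apply, Matrix.add_apply,
      Matrix.smul_apply, Matrix.vecMulVec_apply, Pi.star_apply, Complex.star_def, sum3,
      Dmat_apply, map_pow, homg_conj, wvec7, zadd00, zmul00, zadd01, zmul01, zne01, zadd02, zmul02, zne02, zadd10, zmul10, zne10, zadd11, zmul11, zadd12, zmul12, zne12, zadd20, zmul20, zne20, zadd21, zmul21, zne21, zadd22, zmul22, zneg0, zneg1, zneg2, zval0, zval1, zval2, pwr2, pwr3, pwr4, pwr5, pwr6, pwr7, pwr8, pwr9, pwr10, pwr11, pwr12, pwr13, pwr14, pwr15, pwr16, pwr17, pwr18, pwr19, pwr20, pwr21, pwr22, pwr23, pwr24] <;>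
    (try ring_nf) <;> (try norm_num [pwr2, pwr3, pwr4, pwr5, pwr6, pwr7, pwr8, pwr9, pwr10, pwr11, pwr12, pwr13, pwr14, pwr15, pwr16, pwr17, pwr18, pwr19, pwr20, pwr21, pwr22, pwr23, pwr24]) <;> (try ring)
lemma lineW7 (v : ZMod 3 → ℂ) :
    0 ≤ Wre (0,1) v + Wre (1,1) v + Wre (2,1) v := by
  have h := key 1 (by norm_num) wvec7 v _ lineEq7
  rw [Matrix.add_mulVec, Matrix.add_mulVec, dotProduct_add, dotProduct_add,
    Complex.add_re, Complex.add_re] at h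
  unfold Wre
  nlinarith [h]
noncomputable def wvec8 : ZMod 3 → ℂ := fun j => if j = 0 then (1:ℂ) else if j = 1 then (1:ℂ) else omg 3
lemma lineEq8 : Amat 3 (0,1) + Amat 3 (1,2) + Amat 3 (2,0)
    = ((1:ℝ):ℂ) • vecMulVec wvec8 (star wvec8) := by
  ext j k
  rcases (by decide : ∀ x : ZMod 3, x = 0 ∨ x = 1 ∨ x = 2) j with rfl | rfl | rfl <;>
    rcases (by decide : ∀ x : ZMod 3, x = 0 ∨ x = 1 ∨ x = 2) k with rfl | rfl | rfl <;>
    simp [Amat, A0_eq, Pmat, Matrix.mul_apply, Matrix.conjTranspose_apply, Matrix.add_apply,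
      Matrix.smul_apply, Matrix.vecMulVec_apply, Pi.star_apply, Complex.star_def, sum3,
      Dmat_apply, map_pow, homg_conj, wvec8, zadd00, zmul00, zadd01, zmul01, zne01, zadd02, zmul02, zne02, zadd10, zmul10, zne10, zadd11, zmul11, zadd12, zmul12, zne12, zadd20, zmul20, zne20, zadd21, zmul21, zne21, zadd22, zmul22, zneg0, zneg1, zneg2, zval0, zval1, zval2, pwr2, pwr3, pwr4, pwr5, pwr6, pwr7, pwr8, pwr9, pwr10, pwr11, pwr12, pwr13, pwr14, pwr15, pwr16, pwr17, pwr18, pwr19, pwr20, pwr21, pwr22, pwr23, pwr24] <;>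
    (try ring_nf) <;> (try norm_num [pwr2, pwr3, pwr4, pwr5, pwr6, pwr7, pwr8, pwr9, pwr10, pwr11, pwr12, pwr13, pwr14, pwr15, pwr16, pwr17, pwr18, pwr19, pwr20, pwr21, pwr22, pwr23, pwr24]) <;> (try ring)
lemma lineW8 (v : ZMod 3 → ℂ) :
    0 ≤ Wre (0,1) v + Wre (1,2) v + Wre (2,0) v := by
  have h := key 1 (by norm_num) wvec8 v _ lineEq8
  rw [Matrix.add_mulVec, Matrix.add_mulVec, dotProduct_add, dotProduct_add,
    Complex.add_re, Complex.add_re] at h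
  unfold Wre
  nlinarith [h]
noncomputable def wvec9 : ZMod 3 → ℂ := fun j => if j = 0 then (1:ℂ) else if j = 1 then omg 3 else (1:ℂ)
lemma lineEq9 : Amat 3 (0,2) + Amat 3 (1,0) + Amat 3 (2,1)
    = ((1:ℝ):ℂ) • vecMulVec wvec9 (star wvec9) := by
  ext j k
  rcases (by decide : ∀ x : ZMod 3, x = 0 ∨ x = 1 ∨ x = 2) j with rfl | rfl | rfl <;>
    rcases (by decide : ∀ x : ZMod 3, x = 0 ∨ x = 1 ∨ x = 2) k with rfl | rfl | rfl <;>
    simp [Amat, A0_eq, Pmat, Matrix.mul_apply, Matrix.conjTranspose_apply, Matrix.add_apply,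
      Matrix.smul_apply, Matrix.vecMulVec_apply, Pi.star_apply, Complex.star_def, sum3,
      Dmat_apply, map_pow, homg_conj, wvec9, zadd00, zmul00, zadd01, zmul01, zne01, zadd02, zmul02, zne02, zadd10, zmul10, zne10, zadd11, zmul11, zadd12, zmul12, zne12, zadd20, zmul20, zne20, zadd21, zmul21, zne21, zadd22, zmul22, zneg0, zneg1, zneg2, zval0, zval1, zval2, pwr2, pwr3, pwr4, pwr5, pwr6, pwr7, pwr8, pwr9, pwr10, pwr11, pwr12, pwr13, pwr14, pwr15, pwr16, pwr17, pwr18, pwr19, pwr20, pwr21, pwr22, pwr23, pwr24] <;>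
    (try ring_nf) <;> (try norm_num [pwr2, pwr3, pwr4, pwr5, pwr6, pwr7, pwr8, pwr9, pwr10, pwr11, pwr12, pwr13, pwr14, pwr15, pwr16, pwr17, pwr18, pwr19, pwr20, pwr21, pwr22, pwr23, pwr24]) <;> (try ring)
lemma lineW9 (v : ZMod 3 → ℂ) :
    0 ≤ Wre (0,2) v + Wre (1,0) v + Wre (2,1) v := by
  have h := key 1 (by norm_num) wvec9 v _ lineEq9
  rw [Matrix.add_mulVec, Matrix.add_mulVec, dotProduct_add, dotProduct_add,
    Complex.add_re, Complex.add_re] at h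
  unfold Wre
  nlinarith [h]
noncomputable def wvec10 : ZMod 3 → ℂ := fun j => if j = 0 then (1:ℂ) else if j = 1 then (1:ℂ) else omg 3 ^ 2
lemma lineEq10 : Amat 3 (0,2) + Amat 3 (1,1) + Amat 3 (2,0)
    = ((1:ℝ):ℂ) • vecMulVec wvec10 (star wvec10) := by
  ext j k
  rcases (by decide : ∀ x : ZMod 3, x = 0 ∨ x = 1 ∨ x = 2) j with rfl | rfl | rfl <;>
    rcases (by decide : ∀ x : ZMod 3, x = 0 ∨ x = 1 ∨ x = 2) k with rfl | rfl | rfl <;>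
    simp [Amat, A0_eq, Pmat, Matrix.mul_apply, Matrix.conjTranspose_apply, Matrix.add_apply,
      Matrix.smul_apply, Matrix.vecMulVec_apply, Pi.star_apply, Complex.star_def, sum3,
      Dmat_apply, map_pow, homg_conj, wvec10, zadd00, zmul00, zadd01, zmul01, zne01, zadd02, zmul02, zne02, zadd10, zmul10, zne10, zadd11, zmul11, zadd12, zmul12, zne12, zadd20, zmul20, zne20, zadd21, zmul21, zne21, zadd22, zmul22, zneg0, zneg1, zneg2, zval0, zval1, zval2, pwr2, pwr3, pwr4, pwr5, pwr6, pwr7, pwr8, pwr9, pwr10, pwr11, pwr12, pwr13, pwr14, pwr15, pwr16, pwr17, pwr18, pwr19, pwr20, pwr21, pwr22, pwr23, pwr24] <;>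
    (try ring_nf) <;> (try norm_num [pwr2, pwr3, pwr4, pwr5, pwr6, pwr7, pwr8, pwr9, pwr10, pwr11, pwr12, pwr13, pwr14, pwr15, pwr16, pwr17, pwr18, pwr19, pwr20, pwr21, pwr22, pwr23, pwr24]) <;> (try ring)
lemma lineW10 (v : ZMod 3 → ℂ) :
    0 ≤ Wre (0,2) v + Wre (1,1) v + Wre (2,0) v := by
  have h := key 1 (by norm_num) wvec10 v _ lineEq10
  rw [Matrix.add_mulVec, Matrix.add_mulVec, dotProduct_add, dotProduct_add,
    Complex.add_re, Complex.add_re] at h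
  unfold Wre
  nlinarith [h]
noncomputable def wvec11 : ZMod 3 → ℂ := fun j => if j = 0 then (1:ℂ) else if j = 1 then omg 3 ^ 2 else omg 3
lemma lineEq11 : Amat 3 (0,2) + Amat 3 (1,2) + Amat 3 (2,2)
    = ((1:ℝ):ℂ) • vecMulVec wvec11 (star wvec11) := by
  ext j k
  rcases (by decide : ∀ x : ZMod 3, x = 0 ∨ x = 1 ∨ x = 2) j with rfl | rfl | rfl <;>
    rcases (by decide : ∀ x : ZMod 3, x = 0 ∨ x = 1 ∨ x = 2) k with rfl | rfl | rfl <;>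
    simp [Amat, A0_eq, Pmat, Matrix.mul_apply, Matrix.conjTranspose_apply, Matrix.add_apply,
      Matrix.smul_apply, Matrix.vecMulVec_apply, Pi.star_apply, Complex.star_def, sum3,
      Dmat_apply, map_pow, homg_conj, wvec11, zadd00, zmul00, zadd01, zmul01, zne01, zadd02, zmul02, zne02, zadd10, zmul10, zne10, zadd11, zmul11, zadd12, zmul12, zne12, zadd20, zmul20, zne20, zadd21, zmul21, zne21, zadd22, zmul22, zneg0, zneg1, zneg2, zval0, zval1, zval2, pwr2, pwr3, pwr4, pwr5, pwr6, pwr7, pwr8, pwr9, pwr10, pwr11, pwr12, pwr13, pwr14, pwr15, pwr16, pwr17, pwr18, pwr19, pwr20, pwr21, pwr22, pwr23, pwr24] <;>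
    (try ring_nf) <;> (try norm_num [pwr2, pwr3, pwr4, pwr5, pwr6, pwr7, pwr8, pwr9, pwr10, pwr11, pwr12, pwr13, pwr14, pwr15, pwr16, pwr17, pwr18, pwr19, pwr20, pwr21, pwr22, pwr23, pwr24]) <;> (try ring)
lemma lineW11 (v : ZMod 3 → ℂ) :
    0 ≤ Wre (0,2) v + Wre (1,2) v + Wre (2,2) v := by
  have h := key 1 (by norm_num) wvec11 v _ lineEq11
  rw [Matrix.add_mulVec, Matrix.add_mulVec, dotProduct_add, dotProduct_add,
    Complex.add_re, Complex.add_re] at h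
  unfold Wre
  nlinarith [h]

set_option maxRecDepth 40000 in
lemma cover : ∀ s : Finset (ZMod 3 × ZMod 3), 5 ≤ s.card → ({((0:ZMod 3),(0:ZMod 3)), ((0:ZMod 3),(1:ZMod 3)), ((0:ZMod 3),(2:ZMod 3))} : Finset (ZMod 3 × ZMod 3)) ⊆ s ∨ ({((1:ZMod 3),(0:ZMod 3)), ((1:ZMod 3),(1:ZMod 3)), ((1:ZMod 3),(2:ZMod 3))} : Finset (ZMod 3 × ZMod 3)) ⊆ s ∨ ({((2:ZMod 3),(0:ZMod 3)), ((2:ZMod 3),(1:ZMod 3)), ((2:ZMod 3),(2:ZMod 3))} : Finset (ZMod 3 × ZMod 3)) ⊆ s ∨ ({((0:ZMod 3),(0:ZMod 3)), ((1:ZMod 3),(0:ZMod 3)), ((2:ZMod 3),(0:ZMod 3))} : Finset (ZMod 3 × ZMod 3)) ⊆ s ∨ ({((0:ZMod 3),(0:ZMod 3)), ((1:ZMod 3),(1:ZMod 3)), ((2:ZMod 3),(2:ZMod 3))} : Finset (ZMod 3 × ZMod 3)) ⊆ s ∨ ({((0:ZMod 3),(0:ZMod 3)), ((1:ZMod 3),(2:ZMod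 3)), ((2:ZMod 3),(1:ZMod 3))} : Finset (ZMod 3 × ZMod 3)) ⊆ s ∨ ({((0:ZMod 3),(1:ZMod 3)), ((1:ZMod 3),(0:ZMod 3)), ((2:ZMod 3),(2:ZMod 3))} : Finset (ZMod 3 × ZMod 3)) ⊆ s ∨ ({((0:ZMod 3),(1:ZMod 3)), ((1:ZMod 3),(1:ZMod 3)), ((2:ZMod 3),(1:ZMod 3))} : Finset (ZMod 3 × ZMod 3)) ⊆ s ∨ ({((0:ZMod 3),(1:ZMod 3)), ((1:ZMod 3),(2:ZMod 3)), ((2:ZMod 3),(0:ZMod 3))} : Finset (ZMod 3 × ZMod 3)) ⊆ s ∨ ({((0:ZMod 3),(2:ZMod 3)), ((1:ZMod 3),(0:ZMod 3)), ((2:ZMod 3),(1:ZMod 3))} : Finset (ZMod 3 × ZMod 3)) ⊆ s ∨ ({((0:ZMod 3),(2:ZMod 3)), ((1:ZMod 3),(1:ZMod 3)), ((2:ZMod 3),(0:ZMod 3))} : Finset (ZMod 3 × ZMod 3)) ⊆ s ∨ ({((0:ZMod 3),(2:ZMod 3)), ((1:ZMod 3),(2:ZMod 3)), ((2:ZMod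 3),(2:ZMod 3))} : Finset (ZMod 3 × ZMod 3)) ⊆ s := by decide

theorem at_most_four_negative_wigner_points (v : ZMod 3 → ℂ)
    (hv : star v ⬝ᵥ v = 1) :
    (Finset.univ.filter fun χ : ZMod 3 × ZMod 3 => Wre χ v < 0).card ≤ 4 := by
  by_contra h
  push_neg at h
  set s := Finset.univ.filter fun χ : ZMod 3 × ZMod 3 => Wre χ v < 0 with hs
  have h5 : 5 ≤ s.card := h
  have hneg : ∀ χ ∈ s, Wre χ v < 0 := fun χ hχ => (Finset.mem_filter.mp hχ).2
  rcases cover s h5 with hl|hl|hl|hl|hl|hl|hl|hl|hl|hl|hl|hl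
  · have h0 := hneg _ (hl (by decide : ((0:ZMod 3),(0:ZMod 3)) ∈ _))
    have h1 := hneg _ (hl (by decide : ((0:ZMod 3),(1:ZMod 3)) ∈ _))
    have h2 := hneg _ (hl (by decide : ((0:ZMod 3),(2:ZMod 3)) ∈ _))
    linarith [lineW0 v]
  · have h0 := hneg _ (hl (by decide : ((1:ZMod 3),(0:ZMod 3)) ∈ _))
    have h1 := hneg _ (hl (by decide : ((1:ZMod 3),(1:ZMod 3)) ∈ _))
    have h2 := hneg _ (hl (by decide : ((1:ZMod 3),(2:ZMod 3)) ∈ _))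
    linarith [lineW1 v]
  · have h0 := hneg _ (hl (by decide : ((2:ZMod 3),(0:ZMod 3)) ∈ _))
    have h1 := hneg _ (hl (by decide : ((2:ZMod 3),(1:ZMod 3)) ∈ _))
    have h2 := hneg _ (hl (by decide : ((2:ZMod 3),(2:ZMod 3)) ∈ _))
    linarith [lineW2 v]
  · have h0 := hneg _ (hl (by decide : ((0:ZMod 3),(0:ZMod 3)) ∈ _))
    have h1 := hneg _ (hl (by decide : ((1:ZMod 3),(0:ZMod 3)) ∈ _))
    have h2 := hneg _ (hl (by decide : ((2:ZMod 3),(0:ZMod 3)) ∈ _))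
    linarith [lineW3 v]
  · have h0 := hneg _ (hl (by decide : ((0:ZMod 3),(0:ZMod 3)) ∈ _))
    have h1 := hneg _ (hl (by decide : ((1:ZMod 3),(1:ZMod 3)) ∈ _))
    have h2 := hneg _ (hl (by decide : ((2:ZMod 3),(2:ZMod 3)) ∈ _))
    linarith [lineW4 v]
  · have h0 := hneg _ (hl (by decide : ((0:ZMod 3),(0:ZMod 3)) ∈ _))
    have h1 := hneg _ (hl (by decide : ((1:ZMod 3),(2:ZMod 3)) ∈ _))
    have h2 := hneg _ (hl (by decide : ((2:ZMod 3),(1:ZMod 3)) ∈ _))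
    linarith [lineW5 v]
  · have h0 := hneg _ (hl (by decide : ((0:ZMod 3),(1:ZMod 3)) ∈ _))
    have h1 := hneg _ (hl (by decide : ((1:ZMod 3),(0:ZMod 3)) ∈ _))
    have h2 := hneg _ (hl (by decide : ((2:ZMod 3),(2:ZMod 3)) ∈ _))
    linarith [lineW6 v]
  · have h0 := hneg _ (hl (by decide : ((0:ZMod 3),(1:ZMod 3)) ∈ _))
    have h1 := hneg _ (hl (by decide : ((1:ZMod 3),(1:ZMod 3)) ∈ _))
    have h2 := hneg _ (hl (by decide : ((2:ZMod 3),(1:ZMod 3)) ∈ _))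
    linarith [lineW7 v]
  · have h0 := hneg _ (hl (by decide : ((0:ZMod 3),(1:ZMod 3)) ∈ _))
    have h1 := hneg _ (hl (by decide : ((1:ZMod 3),(2:ZMod 3)) ∈ _))
    have h2 := hneg _ (hl (by decide : ((2:ZMod 3),(0:ZMod 3)) ∈ _))
    linarith [lineW8 v]
  · have h0 := hneg _ (hl (by decide : ((0:ZMod 3),(2:ZMod 3)) ∈ _))
    have h1 := hneg _ (hl (by decide : ((1:ZMod 3),(0:ZMod 3)) ∈ _))
    have h2 := hneg _ (hl (by decide : ((2:ZMod 3),(1:ZMod 3)) ∈ _))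
    linarith [lineW9 v]
  · have h0 := hneg _ (hl (by decide : ((0:ZMod 3),(2:ZMod 3)) ∈ _))
    have h1 := hneg _ (hl (by decide : ((1:ZMod 3),(1:ZMod 3)) ∈ _))
    have h2 := hneg _ (hl (by decide : ((2:ZMod 3),(0:ZMod 3)) ∈ _))
    linarith [lineW10 v]
  · have h0 := hneg _ (hl (by decide : ((0:ZMod 3),(2:ZMod 3)) ∈ _))
    have h1 := hneg _ (hl (by decide : ((1:ZMod 3),(2:ZMod 3)) ∈ _))
    have h2 := hneg _ (hl (by decide : ((2:ZMod 3),(2:ZMod 3)) ∈ _))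
    linarith [lineW11 v]
end
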